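/- In the Artin braid group B_n, the element α₁ = σ_1 σ_2 ⋯ σ_{n−2} σ_{n−1}² satisfies α₁^i σ_1 α₁^{−i} = σ_{1+i} for 1 ≤ i ≤ n−3. -/
import Mathlib


/-- The braid relations on the generators `σ_1, …, σ_{n−1}` (indexed by `Fin (n−1)`):
`σ_i σ_j = σ_j σ_i` for `|i−j| > 1` and `σ_i σ_{i+1} σ_i = σ_{i+1} σ_i σ_{i+1}`. -/
def braidRels (n : ℕ) : Set (FreeGroup (Fin (n - 1))) :=
  {x | (∃ i j : Fin (n - 1), (i : ℕ) + 1 < (j : ℕ) ∧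
          x = FreeGroup.of i * FreeGroup.of j * (FreeGroup.of i)⁻¹ * (FreeGroup.of j)⁻¹) ∨
       (∃ i j : Fin (n - 1), (i : ℕ) + 1 = (j : ℕ) ∧
          x = FreeGroup.of i * FreeGroup.of j * FreeGroup.of i *
              (FreeGroup.of j)⁻¹ * (FreeGroup.of i)⁻¹ * (FreeGroup.of j)⁻¹)}

/-- The Artin braid group `B_n`, presented with generators `σ_1, …, σ_{n−1}` and the
braid and commutation relations. -/
abbrev BraidGroup (n : ℕ) := PresentedGroup (braidRels n)

/-- The standard generator `σ_{i+1}` of `B_n`, for `i : Fin (n−1)` (so `braidSigma 0`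
is `σ_1`). -/
def braidSigma {n : ℕ} (i : Fin (n - 1)) : BraidGroup n := PresentedGroup.of i

/-- The element `α₀ = σ_1 σ_2 ⋯ σ_{n−1}` of `B_n`. -/
def braidAlpha0 (n : ℕ) : BraidGroup n := (List.ofFn (fun i => braidSigma (n := n) i)).prod

/-- The element `α₁ = σ_1 σ_2 ⋯ σ_{n−2} σ_{n−1}²` of `B_n` (for `n ≥ 2`). -/
def braidAlpha1 (n : ℕ) (hn : 2 ≤ n) : BraidGroup n :=
  braidAlpha0 n * braidSigma (⟨n - 2, by omega⟩ : Fin (n - 1))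

namespace Stmt15Aux

/-- Totalized generator family. -/
def g (n k : ℕ) : BraidGroup n := if h : k < n - 1 then braidSigma ⟨k, h⟩ else 1

lemma g_eq {n k : ℕ} (h : k < n - 1) : g n k = braidSigma ⟨k, h⟩ := dif_pos h

lemma rel_one {n : ℕ} {r : FreeGroup (Fin (n - 1))} (hr : r ∈ braidRels n) :
    PresentedGroup.mk (braidRels n) r = 1 := by
  exact (QuotientGroup.eq_one_iff r).mpr (Subgroup.subset_normalClosure hr)

lemma sigma_comm {n : ℕ} (i j : Fin (n - 1)) (h : (i : ℕ) + 1 < (j : ℕ)) :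
    Commute (braidSigma i) (braidSigma j) := by
  have h1 := rel_one (n := n) (Or.inl ⟨i, j, h, rfl⟩)
  simp only [map_mul, map_inv] at h1
  have : braidSigma i * braidSigma j * (braidSigma i)⁻¹ * (braidSigma j)⁻¹ = 1 := h1
  rw [mul_inv_eq_one, mul_inv_eq_iff_eq_mul] at this
  exact this

lemma sigma_braid {n : ℕ} (i j : Fin (n - 1)) (h : (i : ℕ) + 1 = (j : ℕ)) :
    braidSigma i * braidSigma j * braidSigma i =
      braidSigma j * braidSigma i * braidSigma j := by
  have h1 := rel_one (n := n) (Or.inr ⟨i, j, h, rfl⟩)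
  simp only [map_mul, map_inv] at h1
  have : braidSigma i * braidSigma j * braidSigma i * (braidSigma j)⁻¹ *
      (braidSigma i)⁻¹ * (braidSigma j)⁻¹ = 1 := h1
  rw [mul_inv_eq_one, mul_inv_eq_iff_eq_mul, mul_inv_eq_iff_eq_mul] at this
  rw [this]

lemma comm_g {n a b : ℕ} (h : a + 1 < b) : Commute (g n a) (g n b) := by
  unfold g
  split_ifs with ha hb hb
  · exact sigma_comm _ _ h
  · exact Commute.one_right _
  · exact Commute.one_left _
  · exact Commute.one_right _

lemma braid_g {n a : ℕ} (h : a + 1 < n - 1) :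
    g n a * g n (a + 1) * g n a = g n (a + 1) * g n a * g n (a + 1) := by
  rw [g_eq (by omega : a < n - 1), g_eq h]
  exact sigma_braid _ _ rfl

/-- `α₀` as a product over `List.range (n-1)`. -/
def A (n : ℕ) : BraidGroup n := ((List.range (n - 1)).map (g n)).prod

lemma alpha0_eq (n : ℕ) : braidAlpha0 n = A n := by
  unfold braidAlpha0 A
  congr 1
  apply List.ext_getElem
  · simp
  · intro k h1 h2
    simp only [List.getElem_ofFn, List.getElem_map, List.getElem_range]
    rw [g_eq (by simpa using h2)]

lemma comm_prod_high {n j : ℕ} (l : List ℕ) (hl : ∀ x ∈ l, j + 1 < x) :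
    Commute (g n j) ((l.map (g n)).prod) := by
  apply Commute.list_prod_right
  intro y hy
  obtain ⟨x, hx, rfl⟩ := List.mem_map.1 hy
  exact comm_g (hl x hx)

lemma comm_prod_low {n j : ℕ} :
    Commute (g n (j + 1)) (((List.range j).map (g n)).prod) := by
  apply Commute.list_prod_right
  intro y hy
  obtain ⟨x, hx, rfl⟩ := List.mem_map.1 hy
  exact (comm_g (by simpa using (List.mem_range.1 hx))).symm

lemma alpha0_conj {n j : ℕ} (hj : j + 1 < n - 1) :
    A n * g n j = g n (j + 1) * A n := by
  have hsplit : n - 1 = (j + 2) + (n - 1 - (j + 2)) := by omega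
  have h1 : List.range (n - 1) =
      List.range (j + 2) ++ (List.range (n - 1 - (j + 2))).map ((j + 2) + ·) := by
    conv_lhs => rw [hsplit, List.range_add]
  have h2 : List.range (j + 2) = List.range j ++ [j, j + 1] := by
    rw [List.range_succ, List.range_succ]; simp
  set Q : BraidGroup n := ((List.range j).map (g n)).prod with hQ
  set P : BraidGroup n := (((List.range (n - 1 - (j + 2))).map ((j + 2) + ·)).map (g n)).prod
    with hP
  have hA : A n = Q * (g n j * g n (j + 1)) * P := by
    unfold A
    rw [h1, List.map_append, List.prod_append, h2, List.map_append, List.prod_append]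
    simp [hQ, hP, mul_assoc]
  have hPcomm : Commute (g n j) P := by
    rw [hP]
    apply comm_prod_high
    intro x hx
    obtain ⟨y, hy, rfl⟩ := List.mem_map.1 hx
    omega
  have hQcomm : Commute (g n (j + 1)) Q := comm_prod_low
  calc A n * g n j = Q * (g n j * (g n (j + 1) * (P * g n j))) := by rw [hA]; group
    _ = Q * (g n j * (g n (j + 1) * (g n j * P))) := by rw [← hPcomm.eq]
    _ = Q * (g n j * g n (j + 1) * g n j) * P := by group
    _ = Q * (g n (j + 1) * g n j * g n (j + 1)) * P := by rw [braid_g hj]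
    _ = Q * g n (j + 1) * (g n j * (g n (j + 1) * P)) := by group
    _ = g n (j + 1) * Q * (g n j * (g n (j + 1) * P)) := by rw [← hQcomm.eq]
    _ = g n (j + 1) * A n := by rw [hA]; group

lemma alpha1_conj {n j : ℕ} (hn : 2 ≤ n) (hj : j + 1 < n - 2) :
    braidAlpha1 n hn * g n j = g n (j + 1) * braidAlpha1 n hn := by
  have hlast : braidSigma (⟨n - 2, by omega⟩ : Fin (n - 1)) = g n (n - 2) :=
    (g_eq (by omega)).symm
  have hc : Commute (g n j) (g n (n - 2)) := comm_g (by omega)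
  rw [braidAlpha1, hlast, alpha0_eq, mul_assoc, ← hc.eq, ← mul_assoc,
    alpha0_conj (by omega), mul_assoc]

lemma pow_conj {n : ℕ} (hn : 2 ≤ n) (i : ℕ) (hi : i ≤ n - 3) :
    braidAlpha1 n hn ^ i * g n 0 = g n i * braidAlpha1 n hn ^ i := by
  induction i with
  | zero => simp
  | succ k ih =>
      have hk : k ≤ n - 3 := by omega
      have hk2 : k + 1 < n - 2 := by omega
      calc braidAlpha1 n hn ^ (k + 1) * g n 0
          = braidAlpha1 n hn * (braidAlpha1 n hn ^ k * g n 0) := by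
            rw [pow_succ']; group
        _ = braidAlpha1 n hn * (g n k * braidAlpha1 n hn ^ k) := by rw [ih hk]
        _ = (braidAlpha1 n hn * g n k) * braidAlpha1 n hn ^ k := by group
        _ = g n (k + 1) * braidAlpha1 n hn ^ (k + 1) := by
            rw [alpha1_conj hn hk2, pow_succ']; group

end Stmt15Aux

/-- In `B_n`, `α₁^i σ_1 α₁^{−i} = σ_{1+i}` for `1 ≤ i ≤ n−3`. -/
theorem stmt15 (n i : ℕ) (hn : 2 ≤ n) (h1 : 1 ≤ i) (h2 : i ≤ n - 3) :
    braidAlpha1 n hn ^ i * braidSigma (⟨0, by omega⟩ : Fin (n - 1)) *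
        (braidAlpha1 n hn ^ i)⁻¹ =
      braidSigma (⟨i, by omega⟩ : Fin (n - 1)) := by
  have h0 : braidSigma (⟨0, by omega⟩ : Fin (n - 1)) = Stmt15Aux.g n 0 :=
    (Stmt15Aux.g_eq (by omega)).symm
  have hi : braidSigma (⟨i, by omega⟩ : Fin (n - 1)) = Stmt15Aux.g n i :=
    (Stmt15Aux.g_eq (by omega)).symm
  rw [h0, hi, Stmt15Aux.pow_conj hn i h2, mul_assoc, mul_inv_cancel, mul_one]
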